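/- Let A ⊆ ℂ³ be invariant under the weighted ℂ*-action with equal weights w₁ = w₂ > w₃ > 0, and suppose A contains a punctured neighborhood in X of a smooth point (x₀,y₀,0) of an algebraic curve Γ ⊆ {z=0}, such that through (x₀,y₀,0) there pass arcs γ(t) = (γ₁(t), γ₂(t), t^m γ₃(t)) in A with γ₃(0) = v for every v ∈ ℂ. Then the tangent cone T₀A contains the 4-real-dimensional set {(x,y,v) : (x,y,0) ∈ Γ̄, v ∈ ℂ}, where Γ̄ is the cone over Γ (the line through (x₀,y₀)). -/

import Mathlib

open Set Filter Topology

noncomputable section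

def seqTangentConeAtZero {E : Type*} [NormedAddCommGroup E] [NormedSpace ℝ E]
    (A : Set E) : Set E :=
  {v | ∃ (a : ℕ → E) (t : ℕ → ℝ), (∀ n, a n ∈ A) ∧ Tendsto a atTop (nhds 0) ∧
    (∀ n, 0 < t n) ∧ Tendsto t atTop (nhds 0) ∧
    Tendsto (fun n => (t n)⁻¹ • a n) atTop (nhds v)}

lemma aux_cone (w₁ w₃ : ℕ) (hw : w₃ < w₁) (hw₃ : 0 < w₃)
    (A : Set (ℂ × ℂ × ℂ))
    (hInv : ∀ s : ℂ, s ≠ 0 → ∀ p ∈ A, (s ^ w₁ * p.1, s ^ w₁ * p.2.1, s ^ w₃ * p.2.2) ∈ A)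
    (m : ℕ) (hm : 0 < m) (ε : ℝ) (hε : 0 < ε) (γ₁ γ₂ γ₃ : ℝ → ℂ)
    (hc1 : ContinuousOn γ₁ (Ico 0 ε)) (hc2 : ContinuousOn γ₂ (Ico 0 ε))
    (hc3 : ContinuousOn γ₃ (Ico 0 ε))
    (hmem : ∀ t ∈ Ioo (0:ℝ) ε, (γ₁ t, γ₂ t, ((t:ℂ) ^ m) * γ₃ t) ∈ A)
    (σ : ℂ) (hσ : σ ≠ 0) (α d : ℝ) (hα : 0 < α) (hd : 0 ≤ d)
    (heq : α * w₁ = α * w₃ + m + d) :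
    (σ ^ w₁ * (if d = 0 then 1 else 0) * γ₁ 0,
     σ ^ w₁ * (if d = 0 then 1 else 0) * γ₂ 0,
     σ ^ w₃ * γ₃ 0) ∈ seqTangentConeAtZero A := by
  set β : ℝ := α * w₃ + m with hβdef
  have hβ : 0 < β := by
    have : (0:ℝ) < m := by exact_mod_cast hm
    have : (0:ℝ) ≤ α * w₃ := by positivity
    simp only [hβdef]; linarith
  -- sequence t n
  set t : ℕ → ℝ := fun n => ε / (n + 2) with htdef
  have ht0 : ∀ n, 0 < t n := fun n => by positivity
  have htε : ∀ n, t n < ε := by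
    intro n
    have h2 : (1:ℝ) < (n:ℝ) + 2 := by
      have : (0:ℝ) ≤ n := Nat.cast_nonneg n
      linarith
    calc ε / ((n:ℝ) + 2) < ε / 1 := by
          apply div_lt_div_of_pos_left hε one_pos h2
      _ = ε := div_one ε
  have htIoo : ∀ n, t n ∈ Ioo (0:ℝ) ε := fun n => ⟨ht0 n, htε n⟩
  have htlim : Tendsto t atTop (nhds 0) := by
    have h1 : Tendsto (fun n : ℕ => (n:ℝ) + 2) atTop atTop :=
      tendsto_atTop_add_const_right _ 2 tendsto_natCast_atTop_atTop
    simpa using Filter.Tendsto.div_atTop (tendsto_const_nhds (x := ε)) h1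
  -- rpow limit lemma
  have hrpow : ∀ e : ℝ, 0 < e → Tendsto (fun n => t n ^ e) atTop (nhds 0) := by
    intro e he
    have hcont : ContinuousAt (fun x : ℝ => x ^ e) 0 :=
      Real.continuousAt_rpow_const 0 e (Or.inr he.le)
    have := hcont.tendsto.comp htlim
    simpa [Function.comp_def, Real.zero_rpow he.ne'] using this
  -- γ limits
  have hγlim : ∀ γ : ℝ → ℂ, ContinuousOn γ (Ico 0 ε) →
      Tendsto (fun n => γ (t n)) atTop (nhds (γ 0)) := by
    intro γ hγ
    have h0 : (0:ℝ) ∈ Ico 0 ε := ⟨le_refl 0, hε⟩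
    have := (hγ 0 h0).tendsto
    exact this.comp (tendsto_nhdsWithin_of_tendsto_nhds_of_eventually_within _
      htlim (Eventually.of_forall (fun n => ⟨(ht0 n).le, htε n⟩)))
  -- the scaled arcs
  set s : ℕ → ℂ := fun n => σ * ((t n ^ α : ℝ) : ℂ) with hsdef
  have hs0 : ∀ n, s n ≠ 0 := by
    intro n
    have : (t n ^ α : ℝ) ≠ 0 := (Real.rpow_pos_of_pos (ht0 n) α).ne'
    simp [hsdef, hσ, this]
  set a : ℕ → ℂ × ℂ × ℂ := fun n =>
    (s n ^ w₁ * γ₁ (t n), s n ^ w₁ * γ₂ (t n), s n ^ w₃ * (((t n : ℂ)) ^ m * γ₃ (t n)))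
    with hadef
  have haA : ∀ n, a n ∈ A := fun n => hInv (s n) (hs0 n) _ (hmem (t n) (htIoo n))
  -- power computation: s n ^ w = σ^w * ↑(t n ^ (α * w))
  have hpow : ∀ n (w : ℕ), s n ^ w = σ ^ w * ((t n ^ (α * w) : ℝ) : ℂ) := by
    intro n w
    have h1 : (t n ^ α) ^ (w:ℕ) = t n ^ (α * w) := by
      rw [← Real.rpow_natCast (t n ^ α) w, ← Real.rpow_mul (ht0 n).le]
    rw [hsdef]
    push_cast [mul_pow, ← h1]
    ring
  -- limits of s n ^ w
  have hslim : ∀ w : ℕ, 0 < w → Tendsto (fun n => s n ^ w) atTop (nhds 0) := by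
    intro w hwpos
    have he : (0:ℝ) < α * w := by
      have : (0:ℝ) < (w:ℝ) := by exact_mod_cast hwpos
      positivity
    have : Tendsto (fun n => ((t n ^ (α * w) : ℝ) : ℂ)) atTop (nhds 0) := by
      have := (Complex.continuous_ofReal.tendsto 0).comp (hrpow _ he)
      simpa [Function.comp_def] using this
    have := this.const_mul (σ ^ w)
    simp only [mul_zero] at this
    exact Tendsto.congr (fun n => (hpow n w).symm) this
  -- a n → 0
  have hw₁pos : 0 < w₁ := lt_trans hw₃ hw
  have halim : Tendsto a atTop (nhds 0) := by
    have h1 : Tendsto (fun n => s n ^ w₁ * γ₁ (t n)) atTop (nhds 0) := by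
      simpa using (hslim w₁ hw₁pos).mul (hγlim γ₁ hc1)
    have h2 : Tendsto (fun n => s n ^ w₁ * γ₂ (t n)) atTop (nhds 0) := by
      simpa using (hslim w₁ hw₁pos).mul (hγlim γ₂ hc2)
    have h3' : Tendsto (fun n => ((t n : ℂ)) ^ m * γ₃ (t n)) atTop (nhds 0) := by
      have hc : Tendsto (fun n => ((t n : ℂ)) ^ m) atTop (nhds 0) := by
        have := ((Complex.continuous_ofReal.tendsto 0).comp htlim).pow m
        simpa [zero_pow hm.ne'] using this
      simpa using hc.mul (hγlim γ₃ hc3)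
    have h3 : Tendsto (fun n => s n ^ w₃ * (((t n : ℂ)) ^ m * γ₃ (t n))) atTop (nhds 0) := by
      simpa using (hslim w₃ hw₃).mul h3'
    have : Tendsto (fun n => (s n ^ w₁ * γ₁ (t n), s n ^ w₁ * γ₂ (t n),
        s n ^ w₃ * (((t n : ℂ)) ^ m * γ₃ (t n)))) atTop
        (nhds ((0:ℂ), (0:ℂ), (0:ℂ))) := h1.prodMk_nhds (h2.prodMk_nhds h3)
    simpa [hadef, Prod.mk.injEq, Prod.mk_zero_zero] using this
  -- scaling sequence
  set τ : ℕ → ℝ := fun n => t n ^ β with hτdef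
  have hτ0 : ∀ n, 0 < τ n := fun n => Real.rpow_pos_of_pos (ht0 n) β
  have hτlim : Tendsto τ atTop (nhds 0) := hrpow β hβ
  -- key pointwise identity
  have hkey : ∀ n, (τ n)⁻¹ • a n =
      (σ ^ w₁ * ((t n ^ d : ℝ) : ℂ) * γ₁ (t n),
       σ ^ w₁ * ((t n ^ d : ℝ) : ℂ) * γ₂ (t n),
       σ ^ w₃ * γ₃ (t n)) := by
    intro n
    have htne : ((t n ^ β : ℝ) : ℂ) ≠ 0 := by
      exact_mod_cast (Real.rpow_pos_of_pos (ht0 n) β).ne'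
    have e1 : t n ^ (α * (w₁:ℕ)) = t n ^ β * t n ^ d := by
      rw [heq, Real.rpow_add (ht0 n)]
    have e3 : t n ^ (α * (w₃:ℕ)) * t n ^ (m:ℝ) = t n ^ β := by
      rw [← Real.rpow_add (ht0 n)]
    have htm : ((t n : ℂ)) ^ m = ((t n ^ (m:ℝ) : ℝ) : ℂ) := by
      rw [Real.rpow_natCast]
      push_cast
      ring
    have hsm : ∀ z : ℂ, (τ n)⁻¹ • z = (((t n ^ β : ℝ) : ℂ))⁻¹ * z := by
      intro z
      rw [hτdef]
      simp [Complex.real_smul]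
    rw [hadef]
    simp only [Prod.smul_mk, hsm, Prod.mk.injEq]
    have e1' : ((t n ^ (α * (w₁:ℕ)) : ℝ) : ℂ) = ((t n ^ β : ℝ) : ℂ) * ((t n ^ d : ℝ) : ℂ) := by
      exact_mod_cast congrArg Complex.ofReal e1
    have e3' : ((t n ^ (α * (w₃:ℕ)) : ℝ) : ℂ) * ((t n ^ (m:ℝ) : ℝ) : ℂ)
        = ((t n ^ β : ℝ) : ℂ) := by exact_mod_cast congrArg Complex.ofReal e3
    refine ⟨?_, ?_, ?_⟩
    · rw [hpow n w₁, e1']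
      calc ((t n ^ β : ℝ) : ℂ)⁻¹ * (σ ^ w₁ * (((t n ^ β : ℝ) : ℂ) * ((t n ^ d : ℝ) : ℂ)) * γ₁ (t n))
          = ((t n ^ β : ℝ) : ℂ)⁻¹ * (((t n ^ β : ℝ) : ℂ) * (σ ^ w₁ * ((t n ^ d : ℝ) : ℂ) * γ₁ (t n))) := by ring
        _ = _ := inv_mul_cancel_left₀ htne _
    · rw [hpow n w₁, e1']
      calc ((t n ^ β : ℝ) : ℂ)⁻¹ * (σ ^ w₁ * (((t n ^ β : ℝ) : ℂ) * ((t n ^ d : ℝ) : ℂ)) * γ₂ (t n))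
          = ((t n ^ β : ℝ) : ℂ)⁻¹ * (((t n ^ β : ℝ) : ℂ) * (σ ^ w₁ * ((t n ^ d : ℝ) : ℂ) * γ₂ (t n))) := by ring
        _ = _ := inv_mul_cancel_left₀ htne _
    · rw [hpow n w₃, htm]
      calc ((t n ^ β : ℝ) : ℂ)⁻¹ * (σ ^ w₃ * ((t n ^ (α * (w₃:ℕ)) : ℝ) : ℂ) * (((t n ^ (m:ℝ) : ℝ) : ℂ) * γ₃ (t n)))
          = ((t n ^ β : ℝ) : ℂ)⁻¹ * (((t n ^ β : ℝ) : ℂ) * (σ ^ w₃ * γ₃ (t n))) := by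
            rw [← e3']; ring
        _ = _ := inv_mul_cancel_left₀ htne _
  -- limit of t n ^ d
  have hdlim : Tendsto (fun n => ((t n ^ d : ℝ) : ℂ)) atTop
      (nhds (if d = 0 then 1 else 0)) := by
    rcases eq_or_lt_of_le hd with h0 | hpos
    · simp [← h0, Real.rpow_zero]
    · have := (Complex.continuous_ofReal.tendsto 0).comp (hrpow d hpos)
      simp only [if_neg hpos.ne']
      simpa [Function.comp_def] using this
  refine ⟨a, τ, haA, halim, hτ0, hτlim, ?_⟩
  have hfin : Tendsto (fun n =>
      (σ ^ w₁ * ((t n ^ d : ℝ) : ℂ) * γ₁ (t n),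
       σ ^ w₁ * ((t n ^ d : ℝ) : ℂ) * γ₂ (t n),
       σ ^ w₃ * γ₃ (t n))) atTop
      (nhds (σ ^ w₁ * (if d = 0 then 1 else 0) * γ₁ 0,
             σ ^ w₁ * (if d = 0 then 1 else 0) * γ₂ 0,
             σ ^ w₃ * γ₃ 0)) := by
    have h1 := ((hdlim.const_mul (σ ^ w₁)).mul (hγlim γ₁ hc1))
    have h2 := ((hdlim.const_mul (σ ^ w₁)).mul (hγlim γ₂ hc2))
    have h3 := (hγlim γ₃ hc3).const_mul (σ ^ w₃)
    exact h1.prodMk_nhds (h2.prodMk_nhds h3)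
  exact Tendsto.congr (fun n => (hkey n).symm) hfin

theorem stmt5 (w₁ w₃ : ℕ) (hw : w₃ < w₁) (hw₃ : 0 < w₃)
    (A : Set (ℂ × ℂ × ℂ))
    (hInv : ∀ s : ℂ, s ≠ 0 → ∀ p ∈ A, (s ^ w₁ * p.1, s ^ w₁ * p.2.1, s ^ w₃ * p.2.2) ∈ A)
    (x₀ y₀ : ℂ) (hpt : (x₀, y₀) ≠ (0, 0)) (m : ℕ) (hm : 0 < m)
    (harc : ∀ v : ℂ, ∃ (ε : ℝ) (γ₁ γ₂ γ₃ : ℝ → ℂ), 0 < ε ∧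
      ContinuousOn γ₁ (Ico 0 ε) ∧ ContinuousOn γ₂ (Ico 0 ε) ∧ ContinuousOn γ₃ (Ico 0 ε) ∧
      γ₁ 0 = x₀ ∧ γ₂ 0 = y₀ ∧ γ₃ 0 = v ∧
      ∀ t ∈ Ioo (0:ℝ) ε, (γ₁ t, γ₂ t, ((t:ℂ) ^ m) * γ₃ t) ∈ A) :
    {p : ℂ × ℂ × ℂ | ∃ c v : ℂ, p = (c * x₀, c * y₀, v)} ⊆ seqTangentConeAtZero A := by
  rintro p ⟨c, v, rfl⟩
  have hwreal : (0:ℝ) < (w₁:ℝ) - (w₃:ℝ) := by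
    have : (w₃:ℝ) < w₁ := by exact_mod_cast hw
    linarith
  have hmreal : (0:ℝ) < (m:ℝ) := by exact_mod_cast hm
  by_cases hc : c = 0
  · -- case c = 0, use σ = 1, α = (m+1)/(w₁-w₃), d = 1
    obtain ⟨ε, γ₁, γ₂, γ₃, hε, hc1, hc2, hc3, h10, h20, h30, hmem⟩ := harc v
    have := aux_cone w₁ w₃ hw hw₃ A hInv m hm ε hε γ₁ γ₂ γ₃ hc1 hc2 hc3 hmem
      1 one_ne_zero (((m:ℝ) + 1) / ((w₁:ℝ) - w₃)) 1 (by positivity) zero_le_one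
      (by field_simp; ring)
    simp only [one_pow, one_mul, if_neg one_ne_zero, h10, h20, h30] at this
    simpa [hc] using this
  · -- case c ≠ 0, σ a w₁-th root of c, α = m/(w₁-w₃), d = 0
    have hw₁pos : 0 < w₁ := lt_trans hw₃ hw
    obtain ⟨σ, hσc⟩ : ∃ σ : ℂ, σ ^ w₁ = c := by
      rcases IsAlgClosed.exists_pow_nat_eq c hw₁pos with ⟨σ, hσ⟩
      exact ⟨σ, hσ⟩
    have hσ0 : σ ≠ 0 := by
      intro h
      apply hc
      rw [← hσc, h, zero_pow hw₁pos.ne']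
    have hσ3 : σ ^ w₃ ≠ 0 := pow_ne_zero _ hσ0
    obtain ⟨ε, γ₁, γ₂, γ₃, hε, hc1, hc2, hc3, h10, h20, h30, hmem⟩ := harc (v / σ ^ w₃)
    have := aux_cone w₁ w₃ hw hw₃ A hInv m hm ε hε γ₁ γ₂ γ₃ hc1 hc2 hc3 hmem
      σ hσ0 ((m:ℝ) / ((w₁:ℝ) - w₃)) 0 (by positivity) le_rfl
      (by field_simp; ring)
    simp only [if_pos rfl, mul_one, h10, h20, h30, hσc] at this
    have hv : σ ^ w₃ * (v / σ ^ w₃) = v := by field_simp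
    simpa [hv] using this

end
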